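/- Let (Insert, Retract) be a repair of a database (D, IC). Then there is a three-valued model N of D ∪ IC (viewing each atom of D as a formula) such that Insert = N^⊤ \ D and Retract = N^⊤ ∩ D. Concretely, the valuation N defined by N(p) = ⊤ if p ∈ Insert ∪ Retract, N(p) = t if p ∉ Insert ∪ Retract but p ∈ D, and N(p) = f otherwise, is such a model. -/

import Mathlib

/-- Propositional formulas built from atoms using negation, conjunction and disjunction. -/
inductive Fmla (α : Type) : Type where
  | atom : α → Fmla α
  | neg  : Fmla α → Fmla α
  | conj : Fmla α → Fmla α → Fmla α
  | disj : Fmla α → Fmla α → Fmla α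

/-- Two-valued satisfaction; a two-valued valuation is identified with its set of
true atoms `M` (so `M^t = M`, and the minimal Herbrand model `H^D` is `D` itself). -/
def sat2 {α : Type} (M : Set α) : Fmla α → Prop
  | .atom p => p ∈ M
  | .neg φ => ¬ sat2 M φ
  | .conj φ ψ => sat2 M φ ∧ sat2 M ψ
  | .disj φ ψ => sat2 M φ ∨ sat2 M ψ

/-- `M` is a two-valued model of the set of formulas `T`. -/
def models2 {α : Type} (M : Set α) (T : Set (Fmla α)) : Prop := ∀ φ ∈ T, sat2 M φ

/-- `(D, IC)` is a database: `IC` is a finite, classically consistent set of formulas. -/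
def IsDatabase {α : Type} (_D : Set α) (IC : Set (Fmla α)) : Prop :=
  IC.Finite ∧ ∃ M : Set α, models2 M IC

/-- The database `(D, IC)` is consistent: every formula of `IC` follows from `D`,
i.e. is satisfied by the minimal Herbrand model of `D`. -/
def IsConsistentDB {α : Type} (D : Set α) (IC : Set (Fmla α)) : Prop := models2 D IC

/-- `(I, R)` is a repair of the database `(D, IC)`. -/
def IsRepair {α : Type} (D : Set α) (IC : Set (Fmla α)) (I R : Set α) : Prop :=
  I ∩ D = ∅ ∧ R ⊆ D ∧ IsConsistentDB ((D ∪ I) \ R) IC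

/-- The three-valued structure THREE = {t, f, ⊤}. -/
inductive Three : Type where
  | tt | ff | top
  deriving DecidableEq

namespace Three

/-- Position in the truth order `f ≤_t ⊤ ≤_t t`. -/
def rank : Three → ℕ
  | ff => 0 | top => 1 | tt => 2

/-- Conjunction: meet w.r.t. the truth order. -/
def and3 (a b : Three) : Three := if rank a ≤ rank b then a else b

/-- Disjunction: join w.r.t. the truth order. -/
def or3 (a b : Three) : Three := if rank a ≤ rank b then b else a

/-- Negation: swaps `t` and `f`, fixes `⊤`. -/
def neg3 : Three → Three | tt => ff | ff => tt | top => top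

/-- `x ⊕ y`: the least upper bound w.r.t. the knowledge order. -/
def oplus (a b : Three) : Three := if a = b then a else top

/-- The knowledge order `≤_k`: `f` and `t` incomparable, both below `⊤`. -/
def kle (a b : Three) : Prop := a = b ∨ b = top

/-- The designated truth values are `t` and `⊤`. -/
def designated (a : Three) : Prop := a ≠ ff

end Three

/-- Three-valued evaluation of formulas. -/
def eval3 {α : Type} (ν : α → Three) : Fmla α → Three
  | .atom p => ν p
  | .neg φ => Three.neg3 (eval3 ν φ)
  | .conj φ ψ => Three.and3 (eval3 ν φ) (eval3 ν ψ)
  | .disj φ ψ => Three.or3 (eval3 ν φ) (eval3 ν ψ)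

/-- `ν` is a three-valued model of the set of formulas `T`. -/
def models3 {α : Type} (ν : α → Three) (T : Set (Fmla α)) : Prop :=
  ∀ φ ∈ T, Three.designated (eval3 ν φ)

open Classical in
/-- The two-valued valuation with true-set `M`, viewed inside THREE. -/
noncomputable def toThree {α : Type} (M : Set α) (p : α) : Three :=
  if p ∈ M then Three.tt else Three.ff

/-- `ν^⊤`: the atoms assigned `⊤` by `ν`. -/
def topSet {α : Type} (ν : α → Three) : Set α := {p | ν p = Three.top}

/-- `ν ≥_k μ` pointwise. -/
def kge {α : Type} (ν μ : α → Three) : Prop := ∀ p, Three.kle (μ p) (ν p)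

/-- The valuation `H^D ⊕ M` (pointwise `⊕`). -/
noncomputable def herbOplus {α : Type} (D M : Set α) : α → Three :=
  fun p => Three.oplus (toThree D p) (toThree M p)

/-- `M^DB = { N | N ≥_k H^D ⊕ M for some two-valued model M of IC }`. -/
def MDB {α : Type} (D : Set α) (IC : Set (Fmla α)) : Set (α → Three) :=
  {N | ∃ M : Set α, models2 M IC ∧ kge N (herbOplus D M)}

/-- The atoms of `D`, viewed as formulas. -/
def atomsOf {α : Type} (D : Set α) : Set (Fmla α) := Fmla.atom '' D

/-- `(I, R)` is a `≤_i`-preferred repair of `(D, IC)`: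
`(I', R') ≤_i (I, R)` iff `I ⊆ I'` and `R ⊆ R'`. -/
def IsPreferredRepairI {α : Type} (D : Set α) (IC : Set (Fmla α)) (I R : Set α) : Prop :=
  IsRepair D IC I R ∧
    ∀ I' R', IsRepair D IC I' R' → (I' ⊆ I ∧ R' ⊆ R) → (I ⊆ I' ∧ R ⊆ R')

/-- `(I, R)` is a `≤_c`-preferred repair of `(D, IC)`:
`(I', R') ≤_c (I, R)` iff `|I| + |R| ≤ |I'| + |R'|`. -/
def IsPreferredRepairC {α : Type} (D : Set α) (IC : Set (Fmla α)) (I R : Set α) : Prop :=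
  IsRepair D IC I R ∧
    ∀ I' R', IsRepair D IC I' R' → I'.ncard + R'.ncard ≤ I.ncard + R.ncard →
      I.ncard + R.ncard ≤ I'.ncard + R'.ncard

/-- `N` is `≤_i`-maximally consistent in `S`: no `N' ∈ S` has `N'^⊤ ⊊ N^⊤`. -/
def MaxConsI {α : Type} (S : Set (α → Three)) (N : α → Three) : Prop :=
  N ∈ S ∧ ¬ ∃ N' ∈ S, topSet N' ⊂ topSet N

/-- `N` is `≤_c`-maximally consistent in `S`: no `N' ∈ S` has `#(N'^⊤) < #(N^⊤)`. -/
def MaxConsC {α : Type} (S : Set (α → Three)) (N : α → Three) : Prop :=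
  N ∈ S ∧ ¬ ∃ N' ∈ S, (topSet N').ncard < (topSet N).ncard


lemma key_lemma {α : Type} (N : α → Three) (M : Set α)
    (h : ∀ p, N p ≠ Three.top → (N p = Three.tt ↔ p ∈ M)) :
    ∀ φ : Fmla α, eval3 N φ ≠ Three.top → (eval3 N φ = Three.tt ↔ sat2 M φ) := by
  intro φ
  induction φ with
  | atom p => exact h p
  | neg φ ih =>
    cases hφ : eval3 N φ <;>
      simp_all [eval3, Three.neg3, sat2]
  | conj φ ψ ih1 ih2 =>
    cases hφ : eval3 N φ <;> cases hψ : eval3 N ψ <;>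
      simp_all [eval3, Three.and3, Three.rank, sat2]
  | disj φ ψ ih1 ih2 =>
    cases hφ : eval3 N φ <;> cases hψ : eval3 N ψ <;>
      simp_all [eval3, Three.or3, Three.rank, sat2]

open Classical in
/-- Proposition 4: every repair `(I, R)` of `(D, IC)` arises from a
three-valued model `N` of `D ∪ IC` as `(N^⊤ \ D, N^⊤ ∩ D)`; concretely, the
valuation assigning `⊤` on `I ∪ R`, `t` on the rest of `D` and `f` elsewhere is
such a model. -/
theorem three_valued_model_of_repair {α : Type} (D : Set α) (IC : Set (Fmla α))
    (hDB : IsDatabase D IC) (I R : Set α) (h : IsRepair D IC I R) :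
    (∃ N : α → Three, models3 N (atomsOf D ∪ IC) ∧
        I = topSet N \ D ∧ R = topSet N ∩ D) ∧
    (models3 (fun p => if p ∈ I ∪ R then Three.top else
        if p ∈ D then Three.tt else Three.ff) (atomsOf D ∪ IC) ∧
      I = topSet (fun p => if p ∈ I ∪ R then Three.top else
        if p ∈ D then Three.tt else Three.ff) \ D ∧
      R = topSet (fun p => if p ∈ I ∪ R then Three.top else
        if p ∈ D then Three.tt else Three.ff) ∩ D) := by
  classical
  obtain ⟨hID, hRD, hcons⟩ := h
  set N : α → Three := fun p => if p ∈ I ∪ R then Three.top else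
      if p ∈ D then Three.tt else Three.ff with hN
  have hkey : ∀ p, N p ≠ Three.top → (N p = Three.tt ↔ p ∈ (D ∪ I) \ R) := by
    intro p hp
    simp only [hN] at hp ⊢
    by_cases h1 : p ∈ I ∪ R
    · simp [h1] at hp
    · simp only [Set.mem_union, not_or] at h1
      by_cases h2 : p ∈ D <;>
        simp_all [Set.mem_diff, Set.mem_union]
  have hmod : models3 N (atomsOf D ∪ IC) := by
    intro φ hφ
    rcases hφ with hφ | hφ
    · obtain ⟨p, hp, rfl⟩ := hφ
      simp only [Three.designated, eval3, hN]
      by_cases h1 : p ∈ I ∪ R <;> simp [h1, hp]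
    · have hsat : sat2 ((D ∪ I) \ R) φ := hcons φ hφ
      intro hff
      by_cases htop : eval3 N φ = Three.top
      · rw [htop] at hff; exact absurd hff (by decide)
      · have := (key_lemma N _ hkey φ htop).mpr hsat
        rw [this] at hff; exact absurd hff (by decide)
  have htopset : topSet N = I ∪ R := by
    ext p
    simp only [topSet, Set.mem_setOf_eq, hN]
    by_cases h1 : p ∈ I ∪ R
    · simp [h1]
    · by_cases h2 : p ∈ D <;> simp [h1, h2]
  have hI : I = topSet N \ D := by
    rw [htopset]
    ext p
    simp only [Set.mem_diff, Set.mem_union]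
    constructor
    · intro hp
      refine ⟨Or.inl hp, fun hd => ?_⟩
      exact absurd (Set.mem_inter hp hd) (by simp [hID])
    · rintro ⟨hp | hp, hd⟩
      · exact hp
      · exact absurd (hRD hp) hd
  have hR : R = topSet N ∩ D := by
    rw [htopset]
    ext p
    simp only [Set.mem_inter_iff, Set.mem_union]
    constructor
    · intro hp; exact ⟨Or.inr hp, hRD hp⟩
    · rintro ⟨hp | hp, hd⟩
      · exact absurd (Set.mem_inter hp hd) (by simp [hID])
      · exact hp
  exact ⟨⟨N, hmod, hI, hR⟩, hmod, hI, hR⟩
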